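/- arXiv:2002.02766 — 4 statements merged into one kernel-verified Lean document; each statement's English description precedes it below -/
import Mathlib

section
/- Flux identity for the ε-Milne problem: Let ε ∈ (0,1) satisfy ε^(1−n) < R_min, and let f be a classical solution of the ε-Milne problem with geometric correction with continuous source S and arbitrary in-flow data. Then for every η ∈ (0,L): d/dη ⟨sin φ, f⟩(η) + 2 F̃(η) ⟨sin φ, f⟩(η) + 2 G(η) ⟨sin φ cos²ψ, f⟩(η) = ⟨S, 1⟩(η). Moreover, the specular reflection condition f(L,φ,ψ) = f(L,−φ,ψ) implies ⟨sin φ, f⟩(L) = 0. -/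
noncomputable section

open Real Set MeasureTheory

namespace MilneStmt

/-- The boundary-layer thickness `L = ε^(-n)`. -/
def layerL (ε n : ℝ) : ℝ := ε ^ (-n)

/-- The geometric force `F(η,ψ)`. -/
def force (R₁ R₂ ε η ψ : ℝ) : ℝ :=
  -ε * (Real.sin ψ ^ 2 / (R₁ - ε * η) + Real.cos ψ ^ 2 / (R₂ - ε * η))

/-- The domain `D = [0,L] × [-π/2, π/2] × [-π, π]` of the variables `(η, φ, ψ)`. -/
def milneDomain (L : ℝ) : Set (ℝ × ℝ × ℝ) :=
  Icc (0 : ℝ) L ×ˢ Icc (-(π / 2)) (π / 2) ×ˢ Icc (-π) π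

/-- The in-flow set `{(φ,ψ) : sin φ > 0, ψ ∈ [-π,π]}` (with `φ` in the velocity range). -/
def inflowSet : Set (ℝ × ℝ) :=
  {q | 0 < Real.sin q.1 ∧ q.1 ∈ Icc (-(π / 2)) (π / 2) ∧ q.2 ∈ Icc (-π) π}

/-- The angular average `f̄(η)`. -/
def angAvg (f : ℝ × ℝ × ℝ → ℝ) (η : ℝ) : ℝ :=
  (1 / (4 * π)) * ∫ ψ in (-π)..π, ∫ φ in (-(π / 2))..(π / 2), f (η, φ, ψ) * Real.cos φ

/-- Partial derivative in `η`. -/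
def dEta (g : ℝ × ℝ × ℝ → ℝ) (p : ℝ × ℝ × ℝ) : ℝ :=
  deriv (fun t => g (t, p.2.1, p.2.2)) p.1

/-- Partial derivative in `φ`. -/
def dPhi (g : ℝ × ℝ × ℝ → ℝ) (p : ℝ × ℝ × ℝ) : ℝ :=
  deriv (fun t => g (p.1, t, p.2.2)) p.2.1

/-- Partial derivative in `ψ`. -/
def dPsi (g : ℝ × ℝ × ℝ → ℝ) (p : ℝ × ℝ × ℝ) : ℝ :=
  deriv (fun t => g (p.1, p.2.1, t)) p.2.2

/-- A classical solution of the ε-Milne problem with geometric correction,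
with in-flow data `h` and source `S`. -/
structure IsMilneSolution (R₁ R₂ ε n : ℝ) (h : ℝ → ℝ → ℝ) (S : ℝ × ℝ × ℝ → ℝ)
    (f : ℝ × ℝ × ℝ → ℝ) : Prop where
  smooth : ContDiffOn ℝ 1 f (milneDomain (layerL ε n))
  eqn : ∀ p ∈ interior (milneDomain (layerL ε n)),
    Real.sin p.2.1 * dEta f p + force R₁ R₂ ε p.1 p.2.2 * Real.cos p.2.1 * dPhi f p
      + f p - angAvg f p.1 = S p
  inflow : ∀ q ∈ inflowSet, f (0, q.1, q.2) = h q.1 q.2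
  reflect : ∀ φ ψ : ℝ, f (layerL ε n, φ, ψ) = f (layerL ε n, -φ, ψ)

/-- The weighted `L²` norm on `D`. -/
def l2Norm (L : ℝ) (g : ℝ × ℝ × ℝ → ℝ) : ℝ :=
  Real.sqrt (∫ η in (0 : ℝ)..L, ∫ ψ in (-π)..π, ∫ φ in (-(π / 2))..(π / 2),
    g (η, φ, ψ) ^ 2 * Real.cos φ)

/-- The `L^∞` norm (sup over `D`). -/
def linfNorm (L : ℝ) (g : ℝ × ℝ × ℝ → ℝ) : ℝ :=
  ⨆ p ∈ milneDomain L, |g p|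

/-- The `L^∞` norm over the in-flow boundary. -/
def inflowLinf (g : ℝ → ℝ → ℝ) : ℝ :=
  ⨆ q ∈ inflowSet, |g q.1 q.2|

/-- The limit value `f_L = (3/(4π)) ∫∫ f(L,φ,ψ) sin²φ cos φ dφ dψ`. -/
def limitValue (L : ℝ) (f : ℝ × ℝ × ℝ → ℝ) : ℝ :=
  (3 / (4 * π)) * ∫ ψ in (-π)..π, ∫ φ in (-(π / 2))..(π / 2),
    f (L, φ, ψ) * Real.sin φ ^ 2 * Real.cos φ

/-- The data bounds with constants `K` and `M` for in-flow data `h` and source `S`. -/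
structure DataBounds (K M L : ℝ) (h : ℝ → ℝ → ℝ) (S : ℝ × ℝ × ℝ → ℝ) : Prop where
  hSmooth : ContDiffOn ℝ 1 (fun q : ℝ × ℝ => h q.1 q.2) inflowSet
  hBound : ∀ q ∈ inflowSet,
    |h q.1 q.2| + |deriv (fun t => h t q.2) q.1| + |deriv (fun t => h q.1 t) q.2| ≤ M
  sSmooth : ContDiffOn ℝ 1 S (milneDomain L)
  sBound : ∀ p ∈ milneDomain L,
    Real.exp (K * p.1) * (|S p| + |dEta S p| + |dPhi S p| + |dPsi S p|) ≤ M

/-- The angular pairing `⟨a, b⟩(η) = ∫∫ a b cos φ dφ dψ`. -/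
def brkt (a b : ℝ × ℝ × ℝ → ℝ) (η : ℝ) : ℝ :=
  ∫ ψ in (-π)..π, ∫ φ in (-(π / 2))..(π / 2), a (η, φ, ψ) * b (η, φ, ψ) * Real.cos φ

/-- `F̃(η) = -ε/(R₁ - εη)`. -/
def Ftilde (R₁ ε η : ℝ) : ℝ := -ε / (R₁ - ε * η)

/-- `G(η) = -ε(R₁ - R₂)/((R₁ - εη)(R₂ - εη))`. -/
def Gfun (R₁ R₂ ε η : ℝ) : ℝ := -(ε * (R₁ - R₂)) / ((R₁ - ε * η) * (R₂ - ε * η))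

lemma odd_integral {c : ℝ} {u : ℝ → ℝ} (h : ∀ x, u (-x) = - u x) :
    ∫ x in (-c)..c, u x = 0 := by
  have h1 : ∫ x in (-c)..c, u (-x) = ∫ x in (-c)..c, u x := by
    simpa using intervalIntegral.integral_comp_neg u (a := -c) (b := c)
  have h2 : ∫ x in (-c)..c, u (-x) = -∫ x in (-c)..c, u x := by
    simp only [h]; exact intervalIntegral.integral_neg
  linarith

lemma force_decomp {R₁ R₂ ε η : ℝ} (h1 : R₁ - ε * η ≠ 0) (h2 : R₂ - ε * η ≠ 0) (ψ : ℝ) :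
    force R₁ R₂ ε η ψ = Ftilde R₁ ε η + Gfun R₁ R₂ ε η * Real.cos ψ ^ 2 := by
  simp only [force, Ftilde, Gfun, Real.sin_sq]; field_simp; ring

/-- flux identity for the ε-Milne problem, together with the vanishing
of the flux at `η = L` coming from the specular reflection condition. -/
theorem milne_flux_identity (R₁ R₂ n ε : ℝ) (hR₁ : 0 < R₁) (hR₂ : 0 < R₂)
    (hn : n ∈ Ioo (0 : ℝ) (1 / 2)) (hε : ε ∈ Ioo (0 : ℝ) 1)
    (hεn : ε ^ (1 - n) < min R₁ R₂)
    (h : ℝ → ℝ → ℝ) (S f : ℝ × ℝ × ℝ → ℝ)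
    (hS : ContinuousOn S (milneDomain (layerL ε n)))
    (hf : IsMilneSolution R₁ R₂ ε n h S f) :
    (∀ η ∈ Ioo (0 : ℝ) (layerL ε n),
      deriv (brkt (fun p => Real.sin p.2.1) f) η
          + 2 * Ftilde R₁ ε η * brkt (fun p => Real.sin p.2.1) f η
          + 2 * Gfun R₁ R₂ ε η *
              brkt (fun p => Real.sin p.2.1 * Real.cos p.2.2 ^ 2) f η
        = brkt S (fun _ => 1) η) ∧
    brkt (fun p => Real.sin p.2.1) f (layerL ε n) = 0 := by
  obtain ⟨hε0, hε1⟩ := hε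
  obtain ⟨hn0, hn1⟩ := hn
  set L := layerL ε n with hLdef
  have hπ : (0:ℝ) < π := Real.pi_pos
  have hL : 0 < L := Real.rpow_pos_of_pos hε0 _
  have hεL : ε * L = ε ^ (1 - n) := by
    rw [hLdef, layerL, show (1:ℝ) - n = 1 + (-n) by ring, Real.rpow_add hε0, Real.rpow_one]
  have hR1L : ∀ η ∈ Icc (0:ℝ) L, 0 < R₁ - ε * η := by
    intro η hη
    have h1 : ε * η ≤ ε ^ (1-n) := by rw [← hεL]; nlinarith [hη.2]
    have h2 := lt_of_le_of_lt h1 (lt_of_lt_of_le hεn (min_le_left R₁ R₂))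
    linarith
  have hR2L : ∀ η ∈ Icc (0:ℝ) L, 0 < R₂ - ε * η := by
    intro η hη
    have h1 : ε * η ≤ ε ^ (1-n) := by rw [← hεL]; nlinarith [hη.2]
    have h2 := lt_of_le_of_lt h1 (lt_of_lt_of_le hεn (min_le_right R₁ R₂))
    linarith
  set D := milneDomain L with hDdef
  have hDc : IsCompact D := isCompact_Icc.prod (isCompact_Icc.prod isCompact_Icc)
  have hDu : UniqueDiffOn ℝ D :=
    (uniqueDiffOn_Icc hL).prod ((uniqueDiffOn_Icc (by linarith)).prod (uniqueDiffOn_Icc (by linarith)))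
  have hDint : interior D = Ioo (0:ℝ) L ×ˢ Ioo (-(π/2)) (π/2) ×ˢ Ioo (-π) π := by
    rw [hDdef, milneDomain, interior_prod_eq, interior_prod_eq, interior_Icc, interior_Icc,
      interior_Icc]
  have hfc : ContinuousOn f D := hf.smooth.continuousOn
  set fd := fderivWithin ℝ f D with hfddef
  have hfdc : ContinuousOn fd D := hf.smooth.continuousOn_fderivWithin hDu le_rfl
  obtain ⟨C, hC⟩ := hDc.exists_bound_of_continuousOn hfdc
  have hdiff : DifferentiableOn ℝ f D := hf.smooth.differentiableOn one_ne_zero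
  have hFD : ∀ p ∈ interior D, HasFDerivAt f (fd p) p := by
    intro p hp
    have hmem : D ∈ nhds p := mem_interior_iff_mem_nhds.1 hp
    have h1 := (hdiff p (interior_subset hp)).differentiableAt hmem
    rw [hfddef, fderivWithin_of_mem_nhds hmem]
    exact h1.hasFDerivAt
  have hnorm1 : ‖((1:ℝ),(0:ℝ),(0:ℝ))‖ = 1 := by simp [Prod.norm_def]
  have hEta : ∀ p ∈ interior D,
      HasDerivAt (fun t => f (t, p.2.1, p.2.2)) (fd p ((1:ℝ),(0:ℝ),(0:ℝ))) p.1 := by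
    intro p hp
    have hcurve : HasDerivAt (fun t : ℝ => (t, p.2.1, p.2.2)) ((1:ℝ),(0:ℝ),(0:ℝ)) p.1 :=
      HasDerivAt.prodMk (hasDerivAt_id p.1) (HasDerivAt.prodMk (hasDerivAt_const _ _) (hasDerivAt_const _ _))
    exact (hFD p hp).comp_hasDerivAt p.1 hcurve
  have hPhi : ∀ p ∈ interior D,
      HasDerivAt (fun t => f (p.1, t, p.2.2)) (fd p ((0:ℝ),(1:ℝ),(0:ℝ))) p.2.1 := by
    intro p hp
    have hcurve : HasDerivAt (fun t : ℝ => (p.1, t, p.2.2)) ((0:ℝ),(1:ℝ),(0:ℝ)) p.2.1 :=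
      HasDerivAt.prodMk (hasDerivAt_const _ _) (HasDerivAt.prodMk (hasDerivAt_id _) (hasDerivAt_const _ _))
    exact (hFD p hp).comp_hasDerivAt p.2.1 hcurve
  -- product sets
  set Q : Set (ℝ×ℝ) := Icc (-π) π ×ˢ Icc (-(π/2)) (π/2) with hQdef
  set A : Set (ℝ×ℝ) := Ioo (-π) π ×ˢ Ioo (-(π/2)) (π/2) with hAdef
  have hAQ : A ⊆ Q := prod_mono Ioo_subset_Icc_self Ioo_subset_Icc_self
  have hAm : MeasurableSet A := measurableSet_Ioo.prod measurableSet_Ioo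
  have hQc : IsCompact Q := isCompact_Icc.prod isCompact_Icc
  have hAfin : volume A < ⊤ := lt_of_le_of_lt (measure_mono hAQ) hQc.measure_lt_top
  have hcurveC : ∀ η : ℝ, Continuous (fun x : ℝ×ℝ => (η, x.2, x.1)) := by
    intro η; fun_prop
  have hmapsQ : ∀ η ∈ Icc (0:ℝ) L, MapsTo (fun x : ℝ×ℝ => (η, x.2, x.1)) Q D := by
    intro η hη x hx
    exact ⟨hη, hx.2, hx.1⟩
  -- conversion between set integral over A and iterated interval integrals
  have key : ∀ g : ℝ×ℝ → ℝ, ContinuousOn g Q →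
      (∫ x in A, g x) = ∫ ψ in (-π)..π, ∫ φ in (-(π/2))..(π/2), g (ψ, φ) := by
    intro g hg
    have hint : IntegrableOn g A := (hg.integrableOn_compact hQc).mono_set hAQ
    have hinner : ∀ ψ : ℝ, (∫ φ in (-(π/2))..(π/2), g (ψ,φ))
        = ∫ φ in Ioo (-(π/2)) (π/2), g (ψ,φ) := by
      intro ψ
      rw [intervalIntegral.integral_of_le (by linarith), integral_Ioc_eq_integral_Ioo]
    rw [intervalIntegral.integral_of_le (by linarith), integral_Ioc_eq_integral_Ioo]
    simp_rw [hinner]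
    rw [hAdef, Measure.volume_eq_prod] at hint ⊢
    exact setIntegral_prod g hint
  -- continuity helpers
  have hgQ : ∀ η ∈ Icc (0:ℝ) L, ContinuousOn (fun x : ℝ×ℝ => f (η, x.2, x.1)) Q :=
    fun η hη => hfc.comp (hcurveC η).continuousOn (hmapsQ η hη)
  have hfdQ : ∀ η ∈ Icc (0:ℝ) L, ∀ v : ℝ×ℝ×ℝ,
      ContinuousOn (fun x : ℝ×ℝ => fd (η, x.2, x.1) v) Q :=
    fun η hη v => (hfdc.comp (hcurveC η).continuousOn (hmapsQ η hη)).clm_apply continuousOn_const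
  have hsinQ : ContinuousOn (fun x : ℝ×ℝ => Real.sin x.2) Q :=
    (Real.continuous_sin.comp continuous_snd).continuousOn
  have hcosQ : ContinuousOn (fun x : ℝ×ℝ => Real.cos x.2) Q :=
    (Real.continuous_cos.comp continuous_snd).continuousOn
  have hFfunQ : ∀ η ∈ Icc (0:ℝ) L,
      ContinuousOn (fun x : ℝ×ℝ => Real.sin x.2 * f (η, x.2, x.1) * Real.cos x.2) Q :=
    fun η hη => (hsinQ.mul (hgQ η hη)).mul hcosQ
  -- part 2
  have part2 : brkt (fun p => Real.sin p.2.1) f L = 0 := by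
    rw [brkt]
    have hodd : ∀ ψ : ℝ,
        (∫ φ in (-(π/2))..(π/2), Real.sin φ * f (L, φ, ψ) * Real.cos φ) = 0 := by
      intro ψ
      apply odd_integral
      intro x
      have h1 : f (L, -x, ψ) = f (L, x, ψ) := (hf.reflect x ψ).symm
      simp only [Real.sin_neg, Real.cos_neg, h1]
      ring
    simp only [hodd, intervalIntegral.integral_zero]
  refine ⟨?_, part2⟩
  intro η₀ hη₀
  obtain ⟨hη0, hηL⟩ := hη₀
  have hη₀Icc : η₀ ∈ Icc (0:ℝ) L := ⟨le_of_lt hη0, le_of_lt hηL⟩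
  have hintmem : ∀ x ∈ A, ∀ t ∈ Ioo (0:ℝ) L, (t, x.2, x.1) ∈ interior D := by
    intro x hx t ht
    rw [hDint]
    exact ⟨ht, hx.2, hx.1⟩
  set r := min η₀ (L - η₀) with hrdef
  have hr : 0 < r := lt_min hη0 (by linarith)
  have hball : Metric.ball η₀ r ⊆ Ioo (0:ℝ) L := by
    intro x hx
    rw [Metric.mem_ball, Real.dist_eq] at hx
    obtain ⟨h1, h2⟩ := abs_lt.1 hx
    constructor
    · have := min_le_left η₀ (L - η₀); simp only [hrdef] at h1 h2 ⊢; linarith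
    · have := min_le_right η₀ (L - η₀); simp only [hrdef] at h1 h2 ⊢; linarith
  -- the parametric integrand and its η-derivative
  set Ffun : ℝ → ℝ×ℝ → ℝ := fun η x => Real.sin x.2 * f (η, x.2, x.1) * Real.cos x.2
    with hFfundef
  set F2 : ℝ → ℝ×ℝ → ℝ :=
    fun η x => Real.sin x.2 * (fd (η, x.2, x.1) ((1:ℝ),(0:ℝ),(0:ℝ))) * Real.cos x.2 with hF2def
  have hFmeas : ∀ᶠ η in nhds η₀, AEStronglyMeasurable (Ffun η) (volume.restrict A) := by
    filter_upwards [Ioo_mem_nhds hη0 hηL] with η hη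
    exact ((hFfunQ η ⟨le_of_lt hη.1, le_of_lt hη.2⟩).mono hAQ).aestronglyMeasurable hAm
  have hFint : Integrable (Ffun η₀) (volume.restrict A) :=
    ((hFfunQ η₀ hη₀Icc).integrableOn_compact hQc).mono_set hAQ
  have hF2Q : ContinuousOn (F2 η₀) Q := (hsinQ.mul (hfdQ η₀ hη₀Icc _)).mul hcosQ
  have hF2meas : AEStronglyMeasurable (F2 η₀) (volume.restrict A) :=
    (hF2Q.mono hAQ).aestronglyMeasurable hAm
  have h_bound : ∀ᵐ a ∂(volume.restrict A), ∀ x ∈ Metric.ball η₀ r, ‖F2 x a‖ ≤ max C 0 := by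
    filter_upwards [ae_restrict_mem hAm] with a ha x hx
    have hp : (x, a.2, a.1) ∈ interior D := hintmem a ha x (hball hx)
    have h1 : ‖fd (x, a.2, a.1)‖ ≤ C := hC _ (interior_subset hp)
    have hv : |fd (x, a.2, a.1) ((1:ℝ),(0:ℝ),(0:ℝ))| ≤ max C 0 := by
      have h2 := (fd (x, a.2, a.1)).le_opNorm ((1:ℝ),(0:ℝ),(0:ℝ))
      rw [hnorm1, mul_one, Real.norm_eq_abs] at h2
      exact le_trans (le_trans h2 h1) (le_max_left _ _)
    rw [hF2def]
    simp only [Real.norm_eq_abs, abs_mul]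
    have hs := Real.abs_sin_le_one a.2
    have hc := Real.abs_cos_le_one a.2
    have h3 := abs_nonneg (fd (x, a.2, a.1) ((1:ℝ),(0:ℝ),(0:ℝ)))
    have h4 := abs_nonneg (Real.sin a.2)
    have h5 := abs_nonneg (Real.cos a.2)
    have h6 := le_max_right C 0
    have h7 : |Real.sin a.2| * |fd (x, a.2, a.1) ((1:ℝ),(0:ℝ),(0:ℝ))| ≤ max C 0 := by
      nlinarith
    calc |Real.sin a.2| * |fd (x, a.2, a.1) ((1:ℝ),(0:ℝ),(0:ℝ))| * |Real.cos a.2|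
        ≤ (max C 0) * 1 := mul_le_mul h7 hc h5 h6
      _ = max C 0 := mul_one _
  have hboundint : Integrable (fun _ : ℝ×ℝ => max C 0) (volume.restrict A) :=
    integrableOn_const hAfin.ne
  have h_diff : ∀ᵐ a ∂(volume.restrict A), ∀ x ∈ Metric.ball η₀ r,
      HasDerivAt (fun η => Ffun η a) (F2 x a) x := by
    filter_upwards [ae_restrict_mem hAm] with a ha x hx
    have hp : (x, a.2, a.1) ∈ interior D := hintmem a ha x (hball hx)
    have h1 := hEta _ hp
    exact (h1.const_mul (Real.sin a.2)).mul_const (Real.cos a.2)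
  obtain ⟨hF2int, hderivInt⟩ := hasDerivAt_integral_of_dominated_loc_of_deriv_le (Metric.ball_mem_nhds η₀ hr) hFmeas
    hFint hF2meas h_bound hboundint h_diff
  have hbrkt_eq : brkt (fun p => Real.sin p.2.1) f =ᶠ[nhds η₀] (fun η => ∫ a in A, Ffun η a) := by
    filter_upwards [Ioo_mem_nhds hη0 hηL] with η hη
    rw [brkt, key (Ffun η) (hFfunQ η ⟨le_of_lt hη.1, le_of_lt hη.2⟩)]
  have hderiv : deriv (brkt (fun p => Real.sin p.2.1) f) η₀ = ∫ a in A, F2 η₀ a :=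
    (hderivInt.congr_of_eventuallyEq hbrkt_eq).deriv
  -- the four terms of the right-hand side
  set T1 : ℝ×ℝ → ℝ := fun x => S (η₀, x.2, x.1) * Real.cos x.2 with hT1def
  set T2 : ℝ×ℝ → ℝ :=
    fun x => force R₁ R₂ ε η₀ x.1 * Real.cos x.2 ^ 2 * (fd (η₀, x.2, x.1) ((0:ℝ),(1:ℝ),(0:ℝ)))
    with hT2def
  set T3 : ℝ×ℝ → ℝ := fun x => f (η₀, x.2, x.1) * Real.cos x.2 with hT3def
  set T4 : ℝ×ℝ → ℝ := fun x => angAvg f η₀ * Real.cos x.2 with hT4def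
  have hEq : EqOn (F2 η₀) (fun x => T1 x - T2 x - T3 x + T4 x) A := by
    intro a ha
    have hp : (η₀, a.2, a.1) ∈ interior D := hintmem a ha η₀ ⟨hη0, hηL⟩
    have heqn := hf.eqn (η₀, a.2, a.1) hp
    have h1 : dEta f (η₀, a.2, a.1) = fd (η₀, a.2, a.1) ((1:ℝ),(0:ℝ),(0:ℝ)) :=
      (hEta _ hp).deriv
    have h2 : dPhi f (η₀, a.2, a.1) = fd (η₀, a.2, a.1) ((0:ℝ),(1:ℝ),(0:ℝ)) :=
      (hPhi _ hp).deriv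
    rw [h1, h2] at heqn
    simp only [hF2def, hT1def, hT2def, hT3def, hT4def]
    linear_combination (Real.cos a.2) * heqn
  have hcongr : ∫ a in A, F2 η₀ a = ∫ a in A, (T1 a - T2 a - T3 a + T4 a) :=
    setIntegral_congr_fun hAm hEq
  -- continuity and integrability of the four terms
  have hT1Q : ContinuousOn T1 Q :=
    (hS.comp (hcurveC η₀).continuousOn (hmapsQ η₀ hη₀Icc)).mul hcosQ
  have hforceQ : ContinuousOn (fun x : ℝ×ℝ => force R₁ R₂ ε η₀ x.1) Q := by
    apply Continuous.continuousOn
    unfold force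
    exact continuous_const.mul
      ((((Real.continuous_sin.comp continuous_fst).pow 2).div_const _).add
        (((Real.continuous_cos.comp continuous_fst).pow 2).div_const _))
  have hT2Q : ContinuousOn T2 Q := (hforceQ.mul (hcosQ.pow 2)).mul (hfdQ η₀ hη₀Icc _)
  have hT3Q : ContinuousOn T3 Q := (hgQ η₀ hη₀Icc).mul hcosQ
  have hT4Q : ContinuousOn T4 Q := continuousOn_const.mul hcosQ
  have hT1I : IntegrableOn T1 A := (hT1Q.integrableOn_compact hQc).mono_set hAQ
  have hT2I : IntegrableOn T2 A := (hT2Q.integrableOn_compact hQc).mono_set hAQ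
  have hT3I : IntegrableOn T3 A := (hT3Q.integrableOn_compact hQc).mono_set hAQ
  have hT4I : IntegrableOn T4 A := (hT4Q.integrableOn_compact hQc).mono_set hAQ
  have hsplit : ∫ a in A, (T1 a - T2 a - T3 a + T4 a)
      = (∫ a in A, T1 a) - (∫ a in A, T2 a) - (∫ a in A, T3 a) + (∫ a in A, T4 a) := by
    have s1 := integral_sub hT1I hT2I
    have s2 := integral_sub (hT1I.sub hT2I) hT3I
    have s3 := integral_add ((hT1I.sub hT2I).sub hT3I) hT4I
    simp only [Pi.sub_apply] at s1 s2 s3 ⊢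
    rw [s3, s2, s1]
  -- term 1 : the source
  have E1 : ∫ a in A, T1 a = brkt S (fun _ => 1) η₀ := by
    rw [key T1 hT1Q, brkt]
    simp only [mul_one]
    rfl
  -- term 3
  have E3 : ∫ a in A, T3 a = 4 * π * angAvg f η₀ := by
    rw [key T3 hT3Q, angAvg]
    have hπ' : π ≠ 0 := ne_of_gt hπ
    field_simp
    rfl
  -- term 4
  have E4 : ∫ a in A, T4 a = 4 * π * angAvg f η₀ := by
    rw [key T4 hT4Q]
    have hi : ∀ ψ : ℝ, (∫ φ in (-(π/2))..(π/2), angAvg f η₀ * Real.cos φ)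
        = angAvg f η₀ * 2 := by
      intro ψ
      rw [intervalIntegral.integral_const_mul, integral_cos]
      norm_num [Real.sin_pi_div_two]
    simp only [hT4def]
    rw [hi 0]
    simp [intervalIntegral.integral_const]
    ring
  -- integration by parts in φ, for every ψ
  have hIBP : ∀ ψ ∈ Icc (-π) π,
      (∫ φ in (-(π/2))..(π/2), T2 (ψ, φ))
        = 2 * force R₁ R₂ ε η₀ ψ *
            ∫ φ in (-(π/2))..(π/2), Real.sin φ * f (η₀, φ, ψ) * Real.cos φ := by
    intro ψ hψ
    have huD : ∀ φ ∈ Icc (-(π/2)) (π/2), (η₀, φ, ψ) ∈ D := fun φ hφ => ⟨hη₀Icc, hφ, hψ⟩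
    have hcurv : Continuous (fun t : ℝ => ((η₀ : ℝ), t, ψ)) := by fun_prop
    have hfcψ : ContinuousOn (fun t => f (η₀, t, ψ)) (Icc (-(π/2)) (π/2)) :=
      hfc.comp hcurv.continuousOn (fun t ht => huD t ht)
    have hg2c : ContinuousOn (fun t => fd (η₀, t, ψ) ((0:ℝ),(1:ℝ),(0:ℝ)))
        (Icc (-(π/2)) (π/2)) :=
      (hfdc.comp hcurv.continuousOn (fun t ht => huD t ht)).clm_apply continuousOn_const
    have hwc : ContinuousOn (fun t => Real.cos t ^ 2 * f (η₀, t, ψ)) (Icc (-(π/2)) (π/2)) :=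
      (Real.continuous_cos.pow 2).continuousOn.mul hfcψ
    have hwd : ∀ φ ∈ Ioo (-(π/2)) (π/2),
        HasDerivWithinAt (fun t => Real.cos t ^ 2 * f (η₀, t, ψ))
          (-(2 * Real.sin φ * Real.cos φ) * f (η₀, φ, ψ)
            + Real.cos φ ^ 2 * (fd (η₀, φ, ψ) ((0:ℝ),(1:ℝ),(0:ℝ)))) (Ioi φ) φ := by
      intro φ hφ
      have hcos : HasDerivAt (fun t => Real.cos t ^ 2) (-(2 * Real.sin φ * Real.cos φ)) φ := by
        have h1 := (Real.hasDerivAt_cos φ).pow 2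
        norm_num at h1
        rw [show -(2 * Real.sin φ * Real.cos φ) = -(2 * Real.cos φ * Real.sin φ) by ring]
        exact h1
      have hcurved : HasDerivWithinAt (fun t : ℝ => ((η₀:ℝ), t, ψ)) ((0:ℝ),(1:ℝ),(0:ℝ))
          (Ioc φ (π/2)) φ :=
        (HasDerivAt.prodMk (hasDerivAt_const _ _) (HasDerivAt.prodMk (hasDerivAt_id _)
          (hasDerivAt_const _ _))).hasDerivWithinAt
      have hfw : HasFDerivWithinAt f (fd (η₀, φ, ψ)) D (η₀, φ, ψ) :=
        (hdiff _ (huD φ (mem_Icc_of_Ioo hφ))).hasFDerivWithinAt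
      have hmaps : MapsTo (fun t : ℝ => ((η₀:ℝ), t, ψ)) (Ioc φ (π/2)) D := by
        intro t ht
        exact huD t ⟨le_trans hφ.1.le ht.1.le, ht.2⟩
      have hu := hfw.comp_hasDerivWithinAt φ hcurved hmaps
      have hu' : HasDerivWithinAt (fun t => f (η₀, t, ψ))
          (fd (η₀, φ, ψ) ((0:ℝ),(1:ℝ),(0:ℝ))) (Ioi φ) φ :=
        hu.mono_of_mem_nhdsWithin (Ioc_mem_nhdsGT_of_mem ⟨le_refl φ, hφ.2⟩)
      exact hcos.hasDerivWithinAt.mul hu'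
    have i1 : IntervalIntegrable
        (fun φ => -(2 * Real.sin φ * Real.cos φ) * f (η₀, φ, ψ)) volume (-(π/2)) (π/2) := by
      apply ContinuousOn.intervalIntegrable
      rw [uIcc_of_le (by linarith)]
      exact (((continuous_const.mul Real.continuous_sin).mul Real.continuous_cos).neg).continuousOn.mul hfcψ
    have i2 : IntervalIntegrable
        (fun φ => Real.cos φ ^ 2 * (fd (η₀, φ, ψ) ((0:ℝ),(1:ℝ),(0:ℝ)))) volume
        (-(π/2)) (π/2) := by
      apply ContinuousOn.intervalIntegrable
      rw [uIcc_of_le (by linarith)]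
      exact (Real.continuous_cos.pow 2).continuousOn.mul hg2c
    have h0 := intervalIntegral.integral_eq_sub_of_hasDeriv_right_of_le (by linarith) hwc hwd
      (i1.add i2)
    have h0' : (∫ φ in (-(π/2))..(π/2), (-(2 * Real.sin φ * Real.cos φ) * f (η₀, φ, ψ)
        + Real.cos φ ^ 2 * (fd (η₀, φ, ψ) ((0:ℝ),(1:ℝ),(0:ℝ))))) = 0 := by
      rw [h0]
      simp [Real.cos_pi_div_two]
    rw [intervalIntegral.integral_add i1 i2] at h0'
    have hfirst : (∫ φ in (-(π/2))..(π/2), -(2 * Real.sin φ * Real.cos φ) * f (η₀, φ, ψ))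
        = (-2) * ∫ φ in (-(π/2))..(π/2), Real.sin φ * f (η₀, φ, ψ) * Real.cos φ := by
      rw [← intervalIntegral.integral_const_mul]
      apply intervalIntegral.integral_congr
      intro φ _
      ring
    have hg2int : (∫ φ in (-(π/2))..(π/2), Real.cos φ ^ 2 * (fd (η₀, φ, ψ) ((0:ℝ),(1:ℝ),(0:ℝ))))
        = 2 * ∫ φ in (-(π/2))..(π/2), Real.sin φ * f (η₀, φ, ψ) * Real.cos φ := by
      rw [hfirst] at h0'
      linarith
    have hT2φ : (∫ φ in (-(π/2))..(π/2), T2 (ψ, φ))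
        = force R₁ R₂ ε η₀ ψ *
            ∫ φ in (-(π/2))..(π/2), Real.cos φ ^ 2 * (fd (η₀, φ, ψ) ((0:ℝ),(1:ℝ),(0:ℝ))) := by
      rw [← intervalIntegral.integral_const_mul]
      apply intervalIntegral.integral_congr
      intro φ _
      simp only [hT2def]
      ring
    rw [hT2φ, hg2int]
    ring
  -- express ∫ T2 via the two bracket terms
  set U : ℝ×ℝ → ℝ :=
    fun a => 2 * force R₁ R₂ ε η₀ a.1 * (Real.sin a.2 * f (η₀, a.2, a.1) * Real.cos a.2)
    with hUdef
  have hUQ : ContinuousOn U Q :=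
    (continuousOn_const.mul hforceQ).mul (hFfunQ η₀ hη₀Icc)
  have hUinner : ∀ ψ : ℝ, (∫ φ in (-(π/2))..(π/2), U (ψ, φ))
      = 2 * force R₁ R₂ ε η₀ ψ *
          ∫ φ in (-(π/2))..(π/2), Real.sin φ * f (η₀, φ, ψ) * Real.cos φ := by
    intro ψ
    simp only [hUdef]
    rw [intervalIntegral.integral_const_mul]
  have hE2a : ∫ a in A, T2 a = ∫ a in A, U a := by
    rw [key T2 hT2Q, key U hUQ]
    apply intervalIntegral.integral_congr
    intro ψ hψ
    rw [uIcc_of_le (by linarith)] at hψ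
    show (∫ φ in (-(π/2))..(π/2), T2 (ψ, φ)) = ∫ φ in (-(π/2))..(π/2), U (ψ, φ)
    rw [hIBP ψ hψ, hUinner ψ]
  have hfid : ∀ ψ : ℝ, force R₁ R₂ ε η₀ ψ
      = Ftilde R₁ ε η₀ + Gfun R₁ R₂ ε η₀ * Real.cos ψ ^ 2 :=
    force_decomp (ne_of_gt (hR1L η₀ hη₀Icc)) (ne_of_gt (hR2L η₀ hη₀Icc))
  have hcosKQ : ContinuousOn (fun a : ℝ×ℝ => Real.cos a.1 ^ 2 * Ffun η₀ a) Q :=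
    ((Real.continuous_cos.comp continuous_fst).pow 2).continuousOn.mul (hFfunQ η₀ hη₀Icc)
  have hcosKI : IntegrableOn (fun a : ℝ×ℝ => Real.cos a.1 ^ 2 * Ffun η₀ a) A :=
    (hcosKQ.integrableOn_compact hQc).mono_set hAQ
  have hE2b : ∫ a in A, U a = 2 * Ftilde R₁ ε η₀ * (∫ a in A, Ffun η₀ a)
      + 2 * Gfun R₁ R₂ ε η₀ * (∫ a in A, Real.cos a.1 ^ 2 * Ffun η₀ a) := by
    have hEqU : EqOn U (fun a => (2 * Ftilde R₁ ε η₀) * Ffun η₀ a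
        + (2 * Gfun R₁ R₂ ε η₀) * (Real.cos a.1 ^ 2 * Ffun η₀ a)) A := by
      intro a _
      simp only [hUdef, hFfundef]
      rw [hfid a.1]
      ring
    rw [setIntegral_congr_fun hAm hEqU,
      integral_add (hFint.const_mul _) (hcosKI.const_mul _),
      integral_const_mul, integral_const_mul]
  have hK : ∫ a in A, Ffun η₀ a = brkt (fun p => Real.sin p.2.1) f η₀ := by
    rw [brkt, key (Ffun η₀) (hFfunQ η₀ hη₀Icc)]
  have hK2 : ∫ a in A, Real.cos a.1 ^ 2 * Ffun η₀ a
      = brkt (fun p => Real.sin p.2.1 * Real.cos p.2.2 ^ 2) f η₀ := by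
    rw [brkt, key (fun a => Real.cos a.1 ^ 2 * Ffun η₀ a) hcosKQ]
    apply intervalIntegral.integral_congr
    intro ψ _
    apply intervalIntegral.integral_congr
    intro φ _
    simp only [hFfundef]
    ring
  have E2 : ∫ a in A, T2 a
      = 2 * Ftilde R₁ ε η₀ * brkt (fun p => Real.sin p.2.1) f η₀
        + 2 * Gfun R₁ R₂ ε η₀ * brkt (fun p => Real.sin p.2.1 * Real.cos p.2.2 ^ 2) f η₀ := by
    rw [hE2a, hE2b, hK, hK2]
  rw [hderiv, hcongr, hsplit, E1, E2, E3, E4]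
  ring

end MilneStmt
end
end

section
/- Second-moment identity (identity (mt 22)): Let ε ∈ (0,1) satisfy ε^(1−n) < R_min, and let f be a classical solution of the ε-Milne problem with geometric correction with continuous source S and arbitrary in-flow data. Then for every η ∈ (0,L): d/dη ⟨sin²φ, f⟩(η) = −⟨sin φ, f − f̄⟩(η) + F̃(η) ⟨1 − 3 sin²φ, f − f̄⟩(η) + G(η) ⟨(1 − 3 sin²φ) cos²ψ, f − f̄⟩(η) + ⟨sin φ, S⟩(η). -/
set_option maxHeartbeats 1000000


noncomputable section

open Real Set MeasureTheory

namespace MilneStmt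

lemma tietze_ext {s : Set (ℝ × ℝ × ℝ)} (hs : IsClosed s) {f : ℝ × ℝ × ℝ → ℝ}
    (hf : ContinuousOn f s) : ∃ g : ℝ × ℝ × ℝ → ℝ, Continuous g ∧ ∀ x ∈ s, g x = f x := by
  obtain ⟨g, hg⟩ := ContinuousMap.exists_restrict_eq hs ⟨s.restrict f, hf.restrict⟩
  refine ⟨g, g.continuous, fun x hx => ?_⟩
  have := congrFun (congrArg DFunLike.coe hg) ⟨x, hx⟩
  exact this

lemma int13 : ∫ x in (-(π/2))..(π/2), (1 - 3 * Real.sin x ^ 2) * Real.cos x = 0 := by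
  have h : ∀ x ∈ uIcc (-(π/2)) (π/2), HasDerivAt (fun y => Real.sin y - Real.sin y ^ 3)
      ((1 - 3 * Real.sin x ^ 2) * Real.cos x) x := by
    intro x _
    have h1 := Real.hasDerivAt_sin x
    have h2 := h1.pow 3
    exact (h1.sub h2).congr_deriv (by simp; ring)
  rw [intervalIntegral.integral_eq_sub_of_hasDerivAt h
    (by apply Continuous.intervalIntegrable; continuity)]
  norm_num

/-- identity (mt 22): second-moment identity. -/
theorem milne_second_moment_identity (R₁ R₂ n ε : ℝ) (hR₁ : 0 < R₁) (hR₂ : 0 < R₂)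
    (hn : n ∈ Ioo (0 : ℝ) (1 / 2)) (hε : ε ∈ Ioo (0 : ℝ) 1)
    (hεn : ε ^ (1 - n) < min R₁ R₂)
    (h : ℝ → ℝ → ℝ) (S f : ℝ × ℝ × ℝ → ℝ)
    (hS : ContinuousOn S (milneDomain (layerL ε n)))
    (hf : IsMilneSolution R₁ R₂ ε n h S f) :
    ∀ η ∈ Ioo (0 : ℝ) (layerL ε n),
      deriv (brkt (fun p => Real.sin p.2.1 ^ 2) f) η
        = -brkt (fun p => Real.sin p.2.1) (fun p => f p - angAvg f p.1) η
          + Ftilde R₁ ε η * brkt (fun p => 1 - 3 * Real.sin p.2.1 ^ 2)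
              (fun p => f p - angAvg f p.1) η
          + Gfun R₁ R₂ ε η *
              brkt (fun p => (1 - 3 * Real.sin p.2.1 ^ 2) * Real.cos p.2.2 ^ 2)
                (fun p => f p - angAvg f p.1) η
          + brkt (fun p => Real.sin p.2.1) S η := by
  obtain ⟨hε0, hε1⟩ := hε
  intro η₀ hη₀
  have hπ : (0:ℝ) < π := Real.pi_pos
  set L := layerL ε n with hLdef
  have hLpos : 0 < L := Real.rpow_pos_of_pos hε0 _
  have hRpos : ∀ t ∈ Icc (0:ℝ) L, 0 < R₁ - ε * t ∧ 0 < R₂ - ε * t := by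
    intro t ht
    have h1 : ε * t ≤ ε * L := by nlinarith [ht.2, hε0]
    have h2 : ε * L = ε ^ (1 - n) := by
      rw [hLdef]; unfold layerL
      rw [show (1:ℝ) - n = 1 + (-n) by ring, Real.rpow_add hε0, Real.rpow_one]
    have h3 := lt_min_iff.1 hεn
    constructor <;> nlinarith [ht.1, hε0]
  set D := milneDomain L with hDdef
  have hDclosed : IsClosed D := (isClosed_Icc.prod (isClosed_Icc.prod isClosed_Icc))
  have hDcompact : IsCompact D := (isCompact_Icc.prod (isCompact_Icc.prod isCompact_Icc))
  have hmemD : ∀ t φ ψ : ℝ, t ∈ Icc (0:ℝ) L → φ ∈ Icc (-(π/2)) (π/2) → ψ ∈ Icc (-π) π →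
      (t, φ, ψ) ∈ D := fun t φ ψ h1 h2 h3 => ⟨h1, h2, h3⟩
  have hDuniq : UniqueDiffOn ℝ D :=
    (uniqueDiffOn_Icc hLpos).prod ((uniqueDiffOn_Icc (by linarith)).prod
      (uniqueDiffOn_Icc (by linarith)))
  have hDint : interior D = Ioo 0 L ×ˢ Ioo (-(π/2)) (π/2) ×ˢ Ioo (-π) π := by
    rw [hDdef]; unfold milneDomain
    rw [interior_prod_eq, interior_prod_eq, interior_Icc, interior_Icc, interior_Icc]
  have hfc : ContinuousOn f D := hf.smooth.continuousOn
  have hfd : ContinuousOn (fderivWithin ℝ f D) D :=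
    hf.smooth.continuousOn_fderivWithin hDuniq le_rfl
  have hf1c : ContinuousOn (fun p => fderivWithin ℝ f D p (1, 0, 0)) D := by
    exact (ContinuousLinearMap.apply ℝ ℝ ((1:ℝ), (0:ℝ), (0:ℝ))).continuous.comp_continuousOn hfd
  have hf2c : ContinuousOn (fun p => fderivWithin ℝ f D p (0, 1, 0)) D := by
    exact (ContinuousLinearMap.apply ℝ ℝ ((0:ℝ), (1:ℝ), (0:ℝ))).continuous.comp_continuousOn hfd
  obtain ⟨F0, hF0c, hF0⟩ := tietze_ext hDclosed hfc
  obtain ⟨F1, hF1c, hF1⟩ := tietze_ext hDclosed hf1c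
  obtain ⟨F2, hF2c, hF2⟩ := tietze_ext hDclosed hf2c
  obtain ⟨S0, hS0c, hS0⟩ := tietze_ext hDclosed hS
  have lineA : ∀ t φ ψ : ℝ, (t, φ, ψ) ∈ D → t ∈ Ioo (0:ℝ) L →
      HasDerivAt (fun s => F0 (s, φ, ψ)) (F1 (t, φ, ψ)) t := by
    intro t φ ψ hp ht
    have hsub : ∀ s ∈ Icc (0:ℝ) L, (s, φ, ψ) ∈ D := by
      intro s hs
      rw [hDdef] at hp ⊢
      exact ⟨hs, hp.2⟩
    have hfder : HasFDerivWithinAt f (fderivWithin ℝ f D (t,φ,ψ)) D (t,φ,ψ) :=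
      (hf.smooth.differentiableOn one_ne_zero (t,φ,ψ) hp).hasFDerivWithinAt
    have hline : HasDerivAt (fun s : ℝ => ((s, φ, ψ) : ℝ × ℝ × ℝ)) (1, 0, 0) t :=
      (hasDerivAt_id t).prodMk ((hasDerivAt_const t φ).prodMk (hasDerivAt_const t ψ))
    have hcomp : HasDerivWithinAt (fun s => f (s, φ, ψ))
        (fderivWithin ℝ f D (t,φ,ψ) (1,0,0)) (Icc 0 L) t :=
      hfder.comp_hasDerivWithinAt t (hline.hasDerivWithinAt) hsub
    have hIccnhds : Icc (0:ℝ) L ∈ nhds t := Icc_mem_nhds ht.1 ht.2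
    have hda : HasDerivAt (fun s => f (s, φ, ψ)) (fderivWithin ℝ f D (t,φ,ψ) (1,0,0)) t :=
      hcomp.hasDerivAt hIccnhds
    have heq : (fun s => F0 (s, φ, ψ)) =ᶠ[nhds t] (fun s => f (s, φ, ψ)) :=
      Filter.eventuallyEq_of_mem hIccnhds (fun s hs => hF0 _ (hsub s hs))
    rw [hF1 _ hp]
    exact hda.congr_of_eventuallyEq heq
  have lineB : ∀ t φ ψ : ℝ, (t, φ, ψ) ∈ D → φ ∈ Ioo (-(π/2)) (π/2) →
      HasDerivAt (fun s => F0 (t, s, ψ)) (F2 (t, φ, ψ)) φ := by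
    intro t φ ψ hp hφ
    have hsub : ∀ s ∈ Icc (-(π/2)) (π/2), (t, s, ψ) ∈ D := by
      intro s hs
      rw [hDdef] at hp ⊢
      exact ⟨hp.1, hs, hp.2.2⟩
    have hfder : HasFDerivWithinAt f (fderivWithin ℝ f D (t,φ,ψ)) D (t,φ,ψ) :=
      (hf.smooth.differentiableOn one_ne_zero (t,φ,ψ) hp).hasFDerivWithinAt
    have hline : HasDerivAt (fun s : ℝ => ((t, s, ψ) : ℝ × ℝ × ℝ)) (0, 1, 0) φ :=
      (hasDerivAt_const φ t).prodMk ((hasDerivAt_id φ).prodMk (hasDerivAt_const φ ψ))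
    have hcomp : HasDerivWithinAt (fun s => f (t, s, ψ))
        (fderivWithin ℝ f D (t,φ,ψ) (0,1,0)) (Icc (-(π/2)) (π/2)) φ :=
      hfder.comp_hasDerivWithinAt φ (hline.hasDerivWithinAt) hsub
    have hIccnhds : Icc (-(π/2)) (π/2) ∈ nhds φ := Icc_mem_nhds hφ.1 hφ.2
    have hda : HasDerivAt (fun s => f (t, s, ψ)) (fderivWithin ℝ f D (t,φ,ψ) (0,1,0)) φ :=
      hcomp.hasDerivAt hIccnhds
    have heq : (fun s => F0 (t, s, ψ)) =ᶠ[nhds φ] (fun s => f (t, s, ψ)) :=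
      Filter.eventuallyEq_of_mem hIccnhds (fun s hs => hF0 _ (hsub s hs))
    rw [hF2 _ hp]
    exact hda.congr_of_eventuallyEq heq
  have pde : ∀ t φ ψ : ℝ, t ∈ Ioo (0:ℝ) L → φ ∈ Ioo (-(π/2)) (π/2) → ψ ∈ Ioo (-π) π →
      Real.sin φ * F1 (t, φ, ψ) = S0 (t, φ, ψ)
        - force R₁ R₂ ε t ψ * Real.cos φ * F2 (t, φ, ψ) - F0 (t, φ, ψ) + angAvg f t := by
    intro t φ ψ ht hφ hψ
    have hpD : (t,φ,ψ) ∈ D :=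
      hmemD _ _ _ (Ioo_subset_Icc_self ht) (Ioo_subset_Icc_self hφ) (Ioo_subset_Icc_self hψ)
    have hpint : (t,φ,ψ) ∈ interior (milneDomain (layerL ε n)) := by
      rw [← hLdef, ← hDdef, hDint]
      exact ⟨ht, hφ, hψ⟩
    have heq := hf.eqn (t,φ,ψ) hpint
    have h1 : dEta f (t,φ,ψ) = F1 (t,φ,ψ) := by
      have hda := lineA t φ ψ hpD ht
      have hIccnhds : Icc (0:ℝ) L ∈ nhds t := Icc_mem_nhds ht.1 ht.2
      have heqf : (fun s => f (s, φ, ψ)) =ᶠ[nhds t] (fun s => F0 (s, φ, ψ)) :=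
        Filter.eventuallyEq_of_mem hIccnhds
          (fun s hs => (hF0 _ (hmemD s φ ψ hs hpD.2.1 hpD.2.2)).symm)
      show deriv (fun s => f (s, φ, ψ)) t = F1 (t,φ,ψ)
      rw [heqf.deriv_eq, hda.deriv]
    have h2 : dPhi f (t,φ,ψ) = F2 (t,φ,ψ) := by
      have hda := lineB t φ ψ hpD hφ
      have hIccnhds : Icc (-(π/2)) (π/2) ∈ nhds φ := Icc_mem_nhds hφ.1 hφ.2
      have heqf : (fun s => f (t, s, ψ)) =ᶠ[nhds φ] (fun s => F0 (t, s, ψ)) :=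
        Filter.eventuallyEq_of_mem hIccnhds
          (fun s hs => (hF0 _ (hmemD t s ψ hpD.1 hs hpD.2.2)).symm)
      show deriv (fun s => f (t, s, ψ)) φ = F2 (t,φ,ψ)
      rw [heqf.deriv_eq, hda.deriv]
    have h0 : f (t,φ,ψ) = F0 (t,φ,ψ) := (hF0 _ hpD).symm
    have hs0 : S (t,φ,ψ) = S0 (t,φ,ψ) := (hS0 _ hpD).symm
    rw [h1, h2, h0, hs0] at heq
    linarith
  -- the ball
  set δ : ℝ := min η₀ (L - η₀) with hδdef
  have hδpos : 0 < δ := lt_min hη₀.1 (by linarith [hη₀.2])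
  have hball : Metric.ball η₀ δ ⊆ Ioo (0:ℝ) L := by
    intro x hx
    rw [Metric.mem_ball, Real.dist_eq, abs_lt] at hx
    constructor
    · have := min_le_left η₀ (L - η₀); linarith [hx.1]
    · have := min_le_right η₀ (L - η₀); linarith [hx.2]
  -- bound for F1
  obtain ⟨C, hC⟩ := hDcompact.exists_bound_of_continuousOn hF1c.continuousOn
  have hCnn : 0 ≤ C := le_trans (norm_nonneg _) (hC (0, 0, 0)
    (hmemD 0 0 0 ⟨le_rfl, hLpos.le⟩ ⟨by linarith, by linarith⟩ ⟨by linarith, by linarith⟩))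
  have hIoc1 : Set.uIoc (-(π/2)) (π/2) = Ioc (-(π/2)) (π/2) := uIoc_of_le (by linarith)
  have hIoc2 : Set.uIoc (-π) π = Ioc (-π) π := uIoc_of_le (by linarith)
  have innerD : ∀ ψ ∈ Icc (-π) π, ∀ x ∈ Metric.ball η₀ δ,
      HasDerivAt (fun t => ∫ φ in (-(π/2))..(π/2), Real.sin φ ^ 2 * F0 (t, φ, ψ) * Real.cos φ)
        (∫ φ in (-(π/2))..(π/2), Real.sin φ ^ 2 * F1 (x, φ, ψ) * Real.cos φ) x := by
    intro ψ hψ x hx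
    have hεx : 0 < δ - dist x η₀ := by rw [Metric.mem_ball] at hx; linarith
    have hsubball : Metric.ball x (δ - dist x η₀) ⊆ Metric.ball η₀ δ := by
      intro y hy; rw [Metric.mem_ball] at hy ⊢
      calc dist y η₀ ≤ dist y x + dist x η₀ := dist_triangle _ _ _
        _ < δ := by linarith
    refine (intervalIntegral.hasDerivAt_integral_of_dominated_loc_of_deriv_le
      (F := fun y t => Real.sin t ^ 2 * F0 (y, t, ψ) * Real.cos t)
      (F' := fun y t => Real.sin t ^ 2 * F1 (y, t, ψ) * Real.cos t)
      (bound := fun _ => C) (Metric.ball_mem_nhds x hεx)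
      (Filter.Eventually.of_forall fun y => (Continuous.aestronglyMeasurable (by fun_prop)))
      (Continuous.intervalIntegrable (by fun_prop) _ _)
      (Continuous.aestronglyMeasurable (by fun_prop))
      (MeasureTheory.ae_of_all _ fun t ht y hy => ?_)
      intervalIntegrable_const
      (MeasureTheory.ae_of_all _ fun t ht y hy => ?_)).2
    · -- bound
      have hyD : (y, t, ψ) ∈ D := by
        rw [hIoc1] at ht
        exact hmemD _ _ _ (Ioo_subset_Icc_self (hball (hsubball hy)))
          (Ioc_subset_Icc_self ht) hψ
      have h1 : ‖F1 (y, t, ψ)‖ ≤ C := hC _ hyD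
      have h2 : ‖Real.sin t ^ 2 * F1 (y, t, ψ) * Real.cos t‖
          = Real.sin t ^ 2 * ‖F1 (y, t, ψ)‖ * |Real.cos t| := by
        rw [Real.norm_eq_abs, Real.norm_eq_abs, abs_mul, abs_mul, abs_of_nonneg (sq_nonneg _)]
      rw [h2]
      have k1 : Real.sin t ^ 2 * ‖F1 (y, t, ψ)‖ ≤ 1 * C :=
        mul_le_mul (Real.sin_sq_le_one t) h1 (norm_nonneg _) zero_le_one
      have k2 : Real.sin t ^ 2 * ‖F1 (y, t, ψ)‖ * |Real.cos t| ≤ (1 * C) * 1 :=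
        mul_le_mul k1 (Real.abs_cos_le_one t) (abs_nonneg _) (by linarith)
      linarith
    · -- differentiability
      have hyD : (y, t, ψ) ∈ D := by
        rw [hIoc1] at ht
        exact hmemD _ _ _ (Ioo_subset_Icc_self (hball (hsubball hy)))
          (Ioc_subset_Icc_self ht) hψ
      exact ((lineA y t ψ hyD (hball (hsubball hy))).const_mul
        (Real.sin t ^ 2)).mul_const (Real.cos t)
  set G0 : ℝ → ℝ := fun t => ∫ ψ in (-π)..π, ∫ φ in (-(π/2))..(π/2),
      Real.sin φ ^ 2 * F0 (t, φ, ψ) * Real.cos φ with hG0def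
  set u0 : ℝ := ∫ ψ in (-π)..π, ∫ φ in (-(π/2))..(π/2),
      Real.sin φ ^ 2 * F1 (η₀, φ, ψ) * Real.cos φ with hu0def
  have contInner : ∀ g : ℝ × ℝ × ℝ → ℝ, Continuous g → ∀ x : ℝ,
      Continuous (fun ψ => ∫ φ in (-(π/2))..(π/2),
        Real.sin φ ^ 2 * g (x, φ, ψ) * Real.cos φ) := by
    intro g hg x
    apply intervalIntegral.continuous_parametric_intervalIntegral_of_continuous'
      (f := fun ψ φ => Real.sin φ ^ 2 * g (x, φ, ψ) * Real.cos φ)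
    show Continuous fun q : ℝ × ℝ => Real.sin q.2 ^ 2 * g (x, q.2, q.1) * Real.cos q.2
    fun_prop
  have outerD : HasDerivAt G0 u0 η₀ := by
    refine (intervalIntegral.hasDerivAt_integral_of_dominated_loc_of_deriv_le
      (F := fun x ψ => ∫ φ in (-(π/2))..(π/2), Real.sin φ ^ 2 * F0 (x, φ, ψ) * Real.cos φ)
      (F' := fun x ψ => ∫ φ in (-(π/2))..(π/2), Real.sin φ ^ 2 * F1 (x, φ, ψ) * Real.cos φ)
      (bound := fun _ => C * π) (Metric.ball_mem_nhds η₀ hδpos)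
      (Filter.Eventually.of_forall fun x => ((contInner F0 hF0c x).aestronglyMeasurable))
      ((contInner F0 hF0c η₀).intervalIntegrable _ _)
      ((contInner F1 hF1c η₀).aestronglyMeasurable)
      (MeasureTheory.ae_of_all _ fun ψ hψ x hx => ?_)
      intervalIntegrable_const
      (MeasureTheory.ae_of_all _ fun ψ hψ x hx => ?_)).2
    · -- bound
      have hb : ∀ t ∈ Set.uIoc (-(π/2)) (π/2), ‖Real.sin t ^ 2 * F1 (x, t, ψ) * Real.cos t‖ ≤ C := by
        intro t ht
        have hyD : (x, t, ψ) ∈ D := by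
          rw [hIoc1] at ht
          rw [hIoc2] at hψ
          exact hmemD _ _ _ (Ioo_subset_Icc_self (hball hx)) (Ioc_subset_Icc_self ht)
            (Ioc_subset_Icc_self hψ)
        have h1 : ‖F1 (x, t, ψ)‖ ≤ C := hC _ hyD
        have h2 : ‖Real.sin t ^ 2 * F1 (x, t, ψ) * Real.cos t‖
            = Real.sin t ^ 2 * ‖F1 (x, t, ψ)‖ * |Real.cos t| := by
          rw [Real.norm_eq_abs, Real.norm_eq_abs, abs_mul, abs_mul, abs_of_nonneg (sq_nonneg _)]
        rw [h2]
        have k1 : Real.sin t ^ 2 * ‖F1 (x, t, ψ)‖ ≤ 1 * C :=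
          mul_le_mul (Real.sin_sq_le_one t) h1 (norm_nonneg _) zero_le_one
        have k2 : Real.sin t ^ 2 * ‖F1 (x, t, ψ)‖ * |Real.cos t| ≤ (1 * C) * 1 :=
          mul_le_mul k1 (Real.abs_cos_le_one t) (abs_nonneg _) (by linarith)
        linarith
      have := intervalIntegral.norm_integral_le_of_norm_le_const hb
      calc ‖∫ φ in (-(π/2))..(π/2), Real.sin φ ^ 2 * F1 (x, φ, ψ) * Real.cos φ‖
          ≤ C * |π/2 - -(π/2)| := this
        _ = C * π := by rw [abs_of_nonneg (by linarith)]; ring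
    · -- differentiability
      rw [hIoc2] at hψ
      exact innerD ψ (Ioc_subset_Icc_self hψ) x hx
  have hbrval : Set.EqOn (brkt (fun p => Real.sin p.2.1 ^ 2) f) G0 (Icc 0 L) := by
    intro t ht
    show brkt (fun p => Real.sin p.2.1 ^ 2) f t = G0 t
    unfold brkt
    refine intervalIntegral.integral_congr fun ψ hψ => ?_
    rw [uIcc_of_le (by linarith : -π ≤ π)] at hψ
    refine intervalIntegral.integral_congr fun φ hφ => ?_
    rw [uIcc_of_le (by linarith : -(π/2) ≤ π/2)] at hφ
    rw [hF0 _ (hmemD t φ ψ ht hφ hψ)]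
  have hderiv_eq : deriv (brkt (fun p => Real.sin p.2.1 ^ 2) f) η₀ = u0 := by
    have hev : brkt (fun p => Real.sin p.2.1 ^ 2) f =ᶠ[nhds η₀] G0 :=
      Filter.eventuallyEq_of_mem (Icc_mem_nhds hη₀.1 hη₀.2) hbrval
    rw [hev.deriv_eq, outerD.deriv]
  rw [hderiv_eq]
  -- Step 2: identify u0 with the right-hand side
  set avg : ℝ := angAvg f η₀ with havgdef
  set Ifun : ℝ → ℝ := fun ψ => ∫ φ in (-(π/2))..(π/2),
      F0 (η₀, φ, ψ) * ((1 - 3 * Real.sin φ ^ 2) * Real.cos φ) with hIdef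
  set Jfun : ℝ → ℝ := fun ψ => ∫ φ in (-(π/2))..(π/2),
      Real.sin φ * S0 (η₀, φ, ψ) * Real.cos φ with hJdef
  set Kfun : ℝ → ℝ := fun ψ => ∫ φ in (-(π/2))..(π/2),
      Real.sin φ * (F0 (η₀, φ, ψ) - avg) * Real.cos φ with hKdef
  have hIcont : Continuous Ifun := by
    rw [hIdef]
    apply intervalIntegral.continuous_parametric_intervalIntegral_of_continuous'
      (f := fun ψ φ => F0 (η₀, φ, ψ) * ((1 - 3 * Real.sin φ ^ 2) * Real.cos φ))
    show Continuous fun q : ℝ × ℝ => F0 (η₀, q.2, q.1) * ((1 - 3 * Real.sin q.2 ^ 2) * Real.cos q.2)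
    fun_prop
  have hJcont : Continuous Jfun := by
    rw [hJdef]
    apply intervalIntegral.continuous_parametric_intervalIntegral_of_continuous'
      (f := fun ψ φ => Real.sin φ * S0 (η₀, φ, ψ) * Real.cos φ)
    show Continuous fun q : ℝ × ℝ => Real.sin q.2 * S0 (η₀, q.2, q.1) * Real.cos q.2
    fun_prop
  have hKcont : Continuous Kfun := by
    rw [hKdef]
    apply intervalIntegral.continuous_parametric_intervalIntegral_of_continuous'
      (f := fun ψ φ => Real.sin φ * (F0 (η₀, φ, ψ) - avg) * Real.cos φ)
    show Continuous fun q : ℝ × ℝ => Real.sin q.2 * (F0 (η₀, q.2, q.1) - avg) * Real.cos q.2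
    fun_prop
  have hforceC : Continuous (fun ψ => force R₁ R₂ ε η₀ ψ) := by
    unfold force
    exact continuous_const.mul (((Real.continuous_sin.pow 2).div_const _).add
      ((Real.continuous_cos.pow 2).div_const _))
  -- integration by parts in φ
  have byparts : ∀ ψ ∈ Icc (-π) π,
      ∫ φ in (-(π/2))..(π/2), F2 (η₀, φ, ψ) * (Real.sin φ * Real.cos φ ^ 2) = - Ifun ψ := by
    intro ψ hψ
    have hab : -(π/2) ≤ (π/2 : ℝ) := by linarith
    have hcw : ContinuousOn (fun s => F0 (η₀, s, ψ) * (Real.sin s * Real.cos s ^ 2))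
        (Icc (-(π/2)) (π/2)) := Continuous.continuousOn (by fun_prop)
    have hderiv : ∀ s ∈ Ioo (-(π/2)) (π/2),
        HasDerivWithinAt (fun s => F0 (η₀, s, ψ) * (Real.sin s * Real.cos s ^ 2))
          (F2 (η₀, s, ψ) * (Real.sin s * Real.cos s ^ 2)
            + F0 (η₀, s, ψ) * ((1 - 3 * Real.sin s ^ 2) * Real.cos s)) (Ioi s) s := by
      intro s hs
      have hpD : (η₀, s, ψ) ∈ D :=
        hmemD _ _ _ (Ioo_subset_Icc_self hη₀) (Ioo_subset_Icc_self hs) hψ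
      have h1 := lineB η₀ s ψ hpD hs
      have h2 : HasDerivAt (fun y => Real.sin y * Real.cos y ^ 2)
          ((1 - 3 * Real.sin s ^ 2) * Real.cos s) s := by
        have := (Real.hasDerivAt_sin s).mul ((Real.hasDerivAt_cos s).pow 2)
        refine this.congr_deriv ?_
        simp only [Pi.pow_apply]
        linear_combination (Real.cos s) * (Real.sin_sq_add_cos_sq s)
      exact ((h1.mul h2).hasDerivWithinAt)
    have hint : IntervalIntegrable (fun s => F2 (η₀, s, ψ) * (Real.sin s * Real.cos s ^ 2)
        + F0 (η₀, s, ψ) * ((1 - 3 * Real.sin s ^ 2) * Real.cos s)) volume (-(π/2)) (π/2) :=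
      Continuous.intervalIntegrable (by fun_prop) _ _
    have hftc := intervalIntegral.integral_eq_sub_of_hasDeriv_right_of_le hab hcw hderiv hint
    have hzero : (∫ s in (-(π/2))..(π/2), (F2 (η₀, s, ψ) * (Real.sin s * Real.cos s ^ 2)
        + F0 (η₀, s, ψ) * ((1 - 3 * Real.sin s ^ 2) * Real.cos s))) = 0 := by
      rw [hftc]
      simp [Real.cos_pi_div_two]
    rw [intervalIntegral.integral_add (Continuous.intervalIntegrable (by fun_prop) _ _)
      (Continuous.intervalIntegrable (by fun_prop) _ _)] at hzero
    rw [hIdef]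
    linarith [hzero]
  -- pointwise identity for the inner integral
  have inner_eq : ∀ ψ ∈ Ioo (-π) π,
      (∫ φ in (-(π/2))..(π/2), Real.sin φ ^ 2 * F1 (η₀, φ, ψ) * Real.cos φ)
        = Jfun ψ + force R₁ R₂ ε η₀ ψ * Ifun ψ - Kfun ψ := by
    intro ψ hψ
    have hcongr : (∫ φ in (-(π/2))..(π/2), Real.sin φ ^ 2 * F1 (η₀, φ, ψ) * Real.cos φ)
        = ∫ φ in (-(π/2))..(π/2), (Real.sin φ * S0 (η₀, φ, ψ) * Real.cos φ
          - force R₁ R₂ ε η₀ ψ * (F2 (η₀, φ, ψ) * (Real.sin φ * Real.cos φ ^ 2))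
          - Real.sin φ * (F0 (η₀, φ, ψ) - avg) * Real.cos φ) := by
      refine intervalIntegral.integral_congr_ae ?_
      rw [MeasureTheory.ae_iff]
      refine measure_mono_null (fun x hx => ?_) (measure_singleton (π/2 : ℝ))
      rw [mem_setOf_eq, Classical.not_imp] at hx
      obtain ⟨hxI, hne⟩ := hx
      rw [hIoc1] at hxI
      show x ∈ ({π/2} : Set ℝ)
      by_contra hxne
      have hxlt : x < π/2 := lt_of_le_of_ne hxI.2 (fun hh => hxne (by simp [hh]))
      have hpd := pde η₀ x ψ hη₀ ⟨hxI.1, hxlt⟩ hψ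
      exact hne (by rw [havgdef]; linear_combination (Real.sin x * Real.cos x) * hpd)
    rw [hcongr, intervalIntegral.integral_sub
        ((Continuous.intervalIntegrable (by fun_prop) _ _).sub
          (Continuous.intervalIntegrable (by fun_prop) _ _))
        (Continuous.intervalIntegrable (by fun_prop) _ _),
      intervalIntegral.integral_sub (Continuous.intervalIntegrable (by fun_prop) _ _)
        (Continuous.intervalIntegrable (by fun_prop) _ _),
      intervalIntegral.integral_const_mul, byparts ψ (Ioo_subset_Icc_self hψ)]
    rw [hJdef, hKdef]
    ring
  -- outer: rewrite u0
  have hu0eq : u0 = ∫ ψ in (-π)..π,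
      (Jfun ψ + force R₁ R₂ ε η₀ ψ * Ifun ψ - Kfun ψ) := by
    rw [hu0def]
    refine intervalIntegral.integral_congr_ae ?_
    rw [MeasureTheory.ae_iff]
    refine measure_mono_null (fun x hx => ?_) (measure_singleton (π : ℝ))
    rw [mem_setOf_eq, Classical.not_imp] at hx
    obtain ⟨hxI, hne⟩ := hx
    rw [hIoc2] at hxI
    show x ∈ ({π} : Set ℝ)
    by_contra hxne
    have hxlt : x < π := lt_of_le_of_ne hxI.2 (fun hh => hxne (by simp [hh]))
    exact hne (inner_eq x ⟨hxI.1, hxlt⟩)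
  -- force decomposition
  have hforce : ∀ ψ : ℝ, force R₁ R₂ ε η₀ ψ
      = Ftilde R₁ ε η₀ + Gfun R₁ R₂ ε η₀ * Real.cos ψ ^ 2 := by
    intro ψ
    obtain ⟨hA, hB⟩ := hRpos η₀ (Ioo_subset_Icc_self hη₀)
    have hpy := Real.sin_sq_add_cos_sq ψ
    unfold force Ftilde Gfun
    rw [show Real.sin ψ ^ 2 = 1 - Real.cos ψ ^ 2 by linarith]
    field_simp
    ring
  -- split the force integral
  have hsplit : (∫ ψ in (-π)..π, force R₁ R₂ ε η₀ ψ * Ifun ψ)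
      = Ftilde R₁ ε η₀ * (∫ ψ in (-π)..π, Ifun ψ)
        + Gfun R₁ R₂ ε η₀ * (∫ ψ in (-π)..π, Real.cos ψ ^ 2 * Ifun ψ) := by
    have e1 : (∫ ψ in (-π)..π, force R₁ R₂ ε η₀ ψ * Ifun ψ)
        = ∫ ψ in (-π)..π, (Ftilde R₁ ε η₀ * Ifun ψ
            + Gfun R₁ R₂ ε η₀ * (Real.cos ψ ^ 2 * Ifun ψ)) := by
      refine intervalIntegral.integral_congr fun ψ _ => ?_
      rw [hforce ψ]; ring
    rw [e1, intervalIntegral.integral_add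
      (Continuous.intervalIntegrable (by fun_prop) _ _)
      (Continuous.intervalIntegrable (by fun_prop) _ _),
      intervalIntegral.integral_const_mul, intervalIntegral.integral_const_mul]
  -- u0 fully split
  have hu0split : u0 = (∫ ψ in (-π)..π, Jfun ψ)
      + (Ftilde R₁ ε η₀ * (∫ ψ in (-π)..π, Ifun ψ)
        + Gfun R₁ R₂ ε η₀ * (∫ ψ in (-π)..π, Real.cos ψ ^ 2 * Ifun ψ))
      - (∫ ψ in (-π)..π, Kfun ψ) := by
    rw [hu0eq, intervalIntegral.integral_sub
      ((hJcont.intervalIntegrable _ _).add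
        (Continuous.intervalIntegrable (by fun_prop) _ _))
      (hKcont.intervalIntegrable _ _),
      intervalIntegral.integral_add (hJcont.intervalIntegrable _ _)
        (Continuous.intervalIntegrable (by fun_prop) _ _), hsplit]
  -- identifications with brackets
  have hJid : (∫ ψ in (-π)..π, Jfun ψ) = brkt (fun p => Real.sin p.2.1) S η₀ := by
    unfold brkt
    refine intervalIntegral.integral_congr fun ψ hψ => ?_
    rw [uIcc_of_le (by linarith : -π ≤ π)] at hψ
    rw [hJdef]
    refine intervalIntegral.integral_congr fun φ hφ => ?_
    rw [uIcc_of_le (by linarith : -(π/2) ≤ (π/2:ℝ))] at hφ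
    rw [hS0 _ (hmemD η₀ φ ψ (Ico_subset_Icc_self ⟨hη₀.1.le, hη₀.2⟩) hφ hψ)]
  have hKid : (∫ ψ in (-π)..π, Kfun ψ)
      = brkt (fun p => Real.sin p.2.1) (fun p => f p - angAvg f p.1) η₀ := by
    unfold brkt
    refine intervalIntegral.integral_congr fun ψ hψ => ?_
    rw [uIcc_of_le (by linarith : -π ≤ π)] at hψ
    rw [hKdef]
    refine intervalIntegral.integral_congr fun φ hφ => ?_
    rw [uIcc_of_le (by linarith : -(π/2) ≤ (π/2:ℝ))] at hφ
    rw [hF0 _ (hmemD η₀ φ ψ (Ico_subset_Icc_self ⟨hη₀.1.le, hη₀.2⟩) hφ hψ)]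
  have hinner13 : ∀ ψ ∈ Icc (-π) π,
      (∫ φ in (-(π/2))..(π/2), (1 - 3 * Real.sin φ ^ 2) * (f (η₀, φ, ψ) - avg) * Real.cos φ)
        = Ifun ψ := by
    intro ψ hψ
    have e1 : (∫ φ in (-(π/2))..(π/2),
          (1 - 3 * Real.sin φ ^ 2) * (f (η₀, φ, ψ) - avg) * Real.cos φ)
        = ∫ φ in (-(π/2))..(π/2), (F0 (η₀, φ, ψ) * ((1 - 3 * Real.sin φ ^ 2) * Real.cos φ)
            - avg * ((1 - 3 * Real.sin φ ^ 2) * Real.cos φ)) := by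
      refine intervalIntegral.integral_congr fun φ hφ => ?_
      rw [uIcc_of_le (by linarith : -(π/2) ≤ (π/2:ℝ))] at hφ
      rw [← hF0 _ (hmemD η₀ φ ψ (Ico_subset_Icc_self ⟨hη₀.1.le, hη₀.2⟩) hφ hψ)]
      ring
    rw [e1, intervalIntegral.integral_sub (Continuous.intervalIntegrable (by fun_prop) _ _)
      (Continuous.intervalIntegrable (by fun_prop) _ _),
      intervalIntegral.integral_const_mul, int13, hIdef]
    simp
  have hB1id : (∫ ψ in (-π)..π, Ifun ψ)
      = brkt (fun p => 1 - 3 * Real.sin p.2.1 ^ 2) (fun p => f p - angAvg f p.1) η₀ := by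
    unfold brkt
    refine intervalIntegral.integral_congr fun ψ hψ => ?_
    rw [uIcc_of_le (by linarith : -π ≤ π)] at hψ
    exact (hinner13 ψ hψ).symm
  have hB2id : (∫ ψ in (-π)..π, Real.cos ψ ^ 2 * Ifun ψ)
      = brkt (fun p => (1 - 3 * Real.sin p.2.1 ^ 2) * Real.cos p.2.2 ^ 2)
          (fun p => f p - angAvg f p.1) η₀ := by
    unfold brkt
    refine intervalIntegral.integral_congr fun ψ hψ => ?_
    rw [uIcc_of_le (by linarith : -π ≤ π)] at hψ
    rw [← hinner13 ψ hψ, ← intervalIntegral.integral_const_mul]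
    refine intervalIntegral.integral_congr fun φ hφ => ?_
    ring
  rw [hu0split, hJid, hKid, hB1id, hB2id]
  ring


end MilneStmt
end
end

section
/- Conservation of the energy along characteristics: Let R₁, R₂, ε > 0 and fix ψ ∈ ℝ. Suppose η, φ : I → ℝ are differentiable on an interval I with 0 ≤ ε η(s) < min(R₁,R₂) for all s ∈ I, and satisfy the characteristic ODEs dη/ds = sin φ(s) and dφ/ds = F(η(s),ψ) cos φ(s). Then the energy s ↦ e^{−V(η(s),ψ)} cos φ(s) is constant on I. -/
noncomputable section

open Real Set MeasureTheory

namespace MilneStmt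

/-- The potential `V(η,ψ)`, with `V(0,ψ) = 0` and `∂V/∂η = -F(η,ψ)`. -/
def potential (R₁ R₂ ε η ψ : ℝ) : ℝ :=
  Real.sin ψ ^ 2 * Real.log (R₁ / (R₁ - ε * η))
    + Real.cos ψ ^ 2 * Real.log (R₂ / (R₂ - ε * η))

/-- The weight `ζ(η,φ,ψ) = (1 - e^{-2V(η,ψ)} cos²φ)^{1/2}`. -/
def zetaWeight (R₁ R₂ ε : ℝ) (p : ℝ × ℝ × ℝ) : ℝ :=
  Real.sqrt (1 - Real.exp (-2 * potential R₁ R₂ ε p.1 p.2.2) * Real.cos p.2.1 ^ 2)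

/-- conservation of the energy `E = e^{-V} cos φ` along the
characteristics `dη/ds = sin φ`, `dφ/ds = F(η,ψ) cos φ`. -/
theorem energy_conserved_along_characteristics (R₁ R₂ ε ψ : ℝ)
    (hR₁ : 0 < R₁) (hR₂ : 0 < R₂) (hε : 0 < ε)
    (I : Set ℝ) (hI : I.OrdConnected) (η φ : ℝ → ℝ)
    (hdom : ∀ s ∈ I, 0 ≤ ε * η s ∧ ε * η s < min R₁ R₂)
    (hηode : ∀ s ∈ I, HasDerivAt η (Real.sin (φ s)) s)
    (hφode : ∀ s ∈ I, HasDerivAt φ (force R₁ R₂ ε (η s) ψ * Real.cos (φ s)) s) :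
    ∀ s ∈ I, ∀ t ∈ I,
      Real.exp (-potential R₁ R₂ ε (η s) ψ) * Real.cos (φ s)
        = Real.exp (-potential R₁ R₂ ε (η t) ψ) * Real.cos (φ t) := by
  set E : ℝ → ℝ := fun u => Real.exp (-potential R₁ R₂ ε (η u) ψ) * Real.cos (φ u) with hE
  have key : ∀ s ∈ I, HasDerivAt E 0 s := by
    intro s hs
    obtain ⟨h0, h1⟩ := hdom s hs
    have h1' : 0 < R₁ - ε * η s := by
      have := lt_of_lt_of_le h1 (min_le_left R₁ R₂); linarith
    have h2' : 0 < R₂ - ε * η s := by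
      have := lt_of_lt_of_le h1 (min_le_right R₁ R₂); linarith
    have hηc : ContinuousAt η s := (hηode s hs).continuousAt
    have hA : ContinuousAt (fun u => R₁ - ε * η u) s :=
      continuousAt_const.sub (continuousAt_const.mul hηc)
    have hB : ContinuousAt (fun u => R₂ - ε * η u) s :=
      continuousAt_const.sub (continuousAt_const.mul hηc)
    have hevA : ∀ᶠ u in nhds s, 0 < R₁ - ε * η u := hA.eventually (eventually_gt_nhds h1')
    have hevB : ∀ᶠ u in nhds s, 0 < R₂ - ε * η u := hB.eventually (eventually_gt_nhds h2')
    -- derivative of the potential along the characteristic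
    have hgA : HasDerivAt (fun u => R₁ - ε * η u) (-(ε * Real.sin (φ s))) s := by
      have := (hasDerivAt_const s R₁).sub ((hηode s hs).const_mul ε)
      exact this.congr_deriv (by ring)
    have hgB : HasDerivAt (fun u => R₂ - ε * η u) (-(ε * Real.sin (φ s))) s := by
      have := (hasDerivAt_const s R₂).sub ((hηode s hs).const_mul ε)
      exact this.congr_deriv (by ring)
    have hlogA : HasDerivAt (fun u => Real.log (R₁ - ε * η u))
        (-(ε * Real.sin (φ s)) / (R₁ - ε * η s)) s := hgA.log h1'.ne'
    have hlogB : HasDerivAt (fun u => Real.log (R₂ - ε * η u))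
        (-(ε * Real.sin (φ s)) / (R₂ - ε * η s)) s := hgB.log h2'.ne'
    have hP : HasDerivAt (fun u => Real.sin ψ ^ 2 * (Real.log R₁ - Real.log (R₁ - ε * η u))
        + Real.cos ψ ^ 2 * (Real.log R₂ - Real.log (R₂ - ε * η u)))
        (-(force R₁ R₂ ε (η s) ψ * Real.sin (φ s))) s := by
      have := (((hasDerivAt_const s (Real.log R₁)).sub hlogA).const_mul (Real.sin ψ ^ 2)).add
        (((hasDerivAt_const s (Real.log R₂)).sub hlogB).const_mul (Real.cos ψ ^ 2))
      exact this.congr_deriv (by simp only [force]; ring)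
    have hVP : (fun u => potential R₁ R₂ ε (η u) ψ) =ᶠ[nhds s]
        (fun u => Real.sin ψ ^ 2 * (Real.log R₁ - Real.log (R₁ - ε * η u))
          + Real.cos ψ ^ 2 * (Real.log R₂ - Real.log (R₂ - ε * η u))) := by
      filter_upwards [hevA, hevB] with u hu1 hu2
      simp only [potential]
      rw [Real.log_div hR₁.ne' hu1.ne', Real.log_div hR₂.ne' hu2.ne']
    have hV : HasDerivAt (fun u => potential R₁ R₂ ε (η u) ψ)
        (-(force R₁ R₂ ε (η s) ψ * Real.sin (φ s))) s :=
      hP.congr_of_eventuallyEq hVP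
    have hE1 : HasDerivAt (fun u => Real.exp (-potential R₁ R₂ ε (η u) ψ))
        (Real.exp (-potential R₁ R₂ ε (η s) ψ) * (force R₁ R₂ ε (η s) ψ * Real.sin (φ s))) s := by
      have := hV.neg.exp
      exact this.congr_deriv (by simp only [Pi.neg_apply]; ring)
    have hE2 : HasDerivAt (fun u => Real.cos (φ u))
        (-Real.sin (φ s) * (force R₁ R₂ ε (η s) ψ * Real.cos (φ s))) s :=
      (hφode s hs).cos
    have := hE1.mul hE2
    exact this.congr_deriv (by ring)
  have main : ∀ s ∈ I, ∀ t ∈ I, s ≤ t → E s = E t := by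
    intro s hs t ht hst
    have hsub : Icc s t ⊆ I := hI.out hs ht
    have := constant_of_has_deriv_right_zero
      (f := E) (a := s) (b := t)
      (fun x hx => ((key x (hsub hx)).continuousAt).continuousWithinAt)
      (fun x hx => ((key x (hsub (Ico_subset_Icc_self hx))).hasDerivWithinAt))
      t (right_mem_Icc.mpr hst)
    exact this.symm
  intro s hs t ht
  rcases le_total s t with h | h
  · exact main s hs t ht h
  · exact (main t ht s hs h).symm

end MilneStmt
end
end

section
/- Comparison of angles along a characteristic: There exists C > 0, depending only on R₁ and R₂, such that for all ε ∈ (0,1), all 0 ≤ η′ ≤ η with εη ≤ min(R₁,R₂)/2, all ψ ∈ ℝ and all φ ∈ [0, π/2], the angle φ′ ∈ [0, π/2] defined by cos φ′ = e^{V(η′,ψ) − V(η,ψ)} cos φ (well defined, since V(·,ψ) is nondecreasing so that e^{V(η′,ψ) − V(η,ψ)} cos φ ∈ [0,1]) satisfies sin φ ≤ sin φ′ ≤ √(sin²φ + C ε (η − η′)). -/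
noncomputable section

open Real Set MeasureTheory

namespace MilneStmt

lemma log_diff_bounds (R a b : ℝ) (hR : 0 < R) (hab : a ≤ b) (hb : b ≤ R / 2) :
    0 ≤ Real.log (R - a) - Real.log (R - b) ∧
    Real.log (R - a) - Real.log (R - b) ≤ 2 / R * (b - a) := by
  have hRb : 0 < R - b := by linarith
  have hRa : 0 < R - a := by linarith
  constructor
  · have := Real.log_le_log hRb (show R - b ≤ R - a by linarith)
    linarith
  · rw [← Real.log_div hRa.ne' hRb.ne']
    have h2 := Real.log_le_sub_one_of_pos (div_pos hRa hRb)
    have h3 : (R - a) / (R - b) - 1 = (b - a) / (R - b) := by field_simp; ring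
    have h4 : (b - a) / (R - b) ≤ (b - a) / (R / 2) := by
      gcongr
      · linarith
    have h5 : (b - a) / (R / 2) = 2 / R * (b - a) := by field_simp
    linarith

/-- comparison of angles along a characteristic. -/
theorem angle_comparison_along_characteristic (R₁ R₂ : ℝ) (hR₁ : 0 < R₁) (hR₂ : 0 < R₂) :
    ∃ C > (0 : ℝ),
      ∀ ε ∈ Ioo (0 : ℝ) 1, ∀ η' η : ℝ, 0 ≤ η' → η' ≤ η → ε * η ≤ min R₁ R₂ / 2 →
        ∀ ψ : ℝ, ∀ φ ∈ Icc (0 : ℝ) (π / 2), ∀ φ' ∈ Icc (0 : ℝ) (π / 2),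
          Real.cos φ'
              = Real.exp (potential R₁ R₂ ε η' ψ - potential R₁ R₂ ε η ψ) * Real.cos φ →
          Real.sin φ ≤ Real.sin φ' ∧
          Real.sin φ' ≤ Real.sqrt (Real.sin φ ^ 2 + C * ε * (η - η')) := by
  refine ⟨4 / R₁ + 4 / R₂, by positivity, ?_⟩
  rintro ε ⟨hε0, hε1⟩ η' η hη'0 hη'η hηhalf ψ φ ⟨hφ0, hφπ⟩ φ' ⟨hφ'0, hφ'π⟩ hcos
  have hπ := Real.pi_pos
  have hεη1 : ε * η ≤ R₁ / 2 := le_trans hηhalf (by have := min_le_left R₁ R₂; linarith)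
  have hεη2 : ε * η ≤ R₂ / 2 := le_trans hηhalf (by have := min_le_right R₁ R₂; linarith)
  have hεη' : 0 ≤ ε * η' := mul_nonneg hε0.le hη'0
  have hεle : ε * η' ≤ ε * η := mul_le_mul_of_nonneg_left hη'η hε0.le
  have hb1 := log_diff_bounds R₁ (ε * η') (ε * η) hR₁ hεle hεη1
  have hb2 := log_diff_bounds R₂ (ε * η') (ε * η) hR₂ hεle hεη2
  set W := potential R₁ R₂ ε η ψ - potential R₁ R₂ ε η' ψ with hW
  have hRa1 : 0 < R₁ - ε * η' := by linarith
  have hRb1 : 0 < R₁ - ε * η := by linarith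
  have hRa2 : 0 < R₂ - ε * η' := by linarith
  have hRb2 : 0 < R₂ - ε * η := by linarith
  have hWeq : W = Real.sin ψ ^ 2 * (Real.log (R₁ - ε * η') - Real.log (R₁ - ε * η))
      + Real.cos ψ ^ 2 * (Real.log (R₂ - ε * η') - Real.log (R₂ - ε * η)) := by
    simp only [hW, potential, Real.log_div hR₁.ne' hRb1.ne', Real.log_div hR₁.ne' hRa1.ne',
      Real.log_div hR₂.ne' hRb2.ne', Real.log_div hR₂.ne' hRa2.ne']
    ring
  have hs2 : 0 ≤ Real.sin ψ ^ 2 := sq_nonneg _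
  have hc2 : 0 ≤ Real.cos ψ ^ 2 := sq_nonneg _
  have hs2le : Real.sin ψ ^ 2 ≤ 1 := Real.sin_sq_le_one ψ
  have hc2le : Real.cos ψ ^ 2 ≤ 1 := Real.cos_sq_le_one ψ
  have hcos2 : Real.cos φ' = Real.exp (-W) * Real.cos φ := by
    rw [hcos]; congr 2; rw [hW]; ring
  have hW0 : 0 ≤ W := by
    rw [hWeq]
    have := mul_nonneg hs2 hb1.1
    have := mul_nonneg hc2 hb2.1
    linarith
  have hWle : W ≤ (2 / R₁ + 2 / R₂) * (ε * η - ε * η') := by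
    rw [hWeq]
    have e1 : Real.sin ψ ^ 2 * (Real.log (R₁ - ε * η') - Real.log (R₁ - ε * η))
        ≤ 2 / R₁ * (ε * η - ε * η') := by
      exact (mul_le_of_le_one_left hb1.1 hs2le).trans hb1.2
    have e2 : Real.cos ψ ^ 2 * (Real.log (R₂ - ε * η') - Real.log (R₂ - ε * η))
        ≤ 2 / R₂ * (ε * η - ε * η') := by
      exact (mul_le_of_le_one_left hb2.1 hc2le).trans hb2.2
    linarith [add_mul (2 / R₁) (2 / R₂) (ε * η - ε * η')]
  clear hcos hWeq hW
  clear_value W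
  -- trig facts
  have hcosφ0 : 0 ≤ Real.cos φ := Real.cos_nonneg_of_mem_Icc ⟨by linarith, hφπ⟩
  have hcosφ'0 : 0 ≤ Real.cos φ' := Real.cos_nonneg_of_mem_Icc ⟨by linarith, hφ'π⟩
  have hsinφ0 : 0 ≤ Real.sin φ := Real.sin_nonneg_of_nonneg_of_le_pi hφ0 (by linarith)
  have hsinφ'0 : 0 ≤ Real.sin φ' := Real.sin_nonneg_of_nonneg_of_le_pi hφ'0 (by linarith)
  have hexp_le : Real.exp (-W) ≤ 1 := Real.exp_le_one_iff.mpr (by linarith)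
  have hcosle : Real.cos φ' ≤ Real.cos φ := by
    rw [hcos2]
    exact mul_le_of_le_one_left hcosφ0 hexp_le
  have hcossq : Real.cos φ' ^ 2 = Real.exp (-(2 * W)) * Real.cos φ ^ 2 := by
    rw [hcos2, mul_pow, sq (Real.exp (-W)), ← Real.exp_add]
    congr 2
    ring
  have hexpW := Real.add_one_le_exp (-(2 * W))
  have hcφ2le : Real.cos φ ^ 2 ≤ 1 := Real.cos_sq_le_one φ
  have hsq : Real.sin φ ^ 2 ≤ Real.sin φ' ^ 2 := by
    have : Real.cos φ' ^ 2 ≤ Real.cos φ ^ 2 := pow_le_pow_left₀ hcosφ'0 hcosle 2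
    rw [Real.sin_sq, Real.sin_sq]
    linarith
  have hsq2 : Real.sin φ' ^ 2 ≤ Real.sin φ ^ 2 + (4 / R₁ + 4 / R₂) * ε * (η - η') := by
    have key : Real.sin φ' ^ 2 ≤ Real.sin φ ^ 2 + 2 * W := by
      rw [Real.sin_sq, Real.sin_sq, hcossq]
      nlinarith [sq_nonneg (Real.cos φ)]
    have h2 : (4 / R₁ + 4 / R₂) * ε * (η - η') = 2 * ((2 / R₁ + 2 / R₂) * (ε * η - ε * η')) := by
      ring
    linarith
  constructor
  · calc Real.sin φ = Real.sqrt (Real.sin φ ^ 2) := (Real.sqrt_sq hsinφ0).symm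
      _ ≤ Real.sqrt (Real.sin φ' ^ 2) := Real.sqrt_le_sqrt hsq
      _ = Real.sin φ' := Real.sqrt_sq hsinφ'0
  · calc Real.sin φ' = Real.sqrt (Real.sin φ' ^ 2) := (Real.sqrt_sq hsinφ'0).symm
      _ ≤ _ := Real.sqrt_le_sqrt hsq2

end MilneStmt
end
end
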